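/- Let n ≥ 6 and let G be a graph on n vertices with minimum degree at least n-2. If T is a tree on n vertices not isomorphic to the star K_{1,n-1}, then T embeds into G (i.e., G contains a spanning subgraph isomorphic to T). -/

import Mathlib

open SimpleGraph Finset

private lemma flatMap_sublist {α β : Type} {l₁ l₂ : List α} (f : α → List β) (h : l₁.Sublist l₂) :
    (l₁.flatMap f).Sublist (l₂.flatMap f) := by
  induction h with
  | slnil => simp
  | cons a h ih => simpa using ih.trans (List.sublist_append_right (f a) _)
  | cons_cons a h ih => simpa using ih.append_left (f a)

private lemma flat_length {α : Type} : ∀ L : List (α × α),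
    (L.flatMap fun p => [p.1, p.2]).length = 2 * L.length
  | [] => by simp
  | p :: L => by simp [flat_length L]; omega

private lemma zip_flatMap_pairs {α β : Type} :
    ∀ (L₁ : List (α × α)) (L₂ : List (β × β)), L₁.length = L₂.length →
    (L₁.flatMap fun p => [p.1, p.2]).zip (L₂.flatMap fun p => [p.1, p.2])
      = (L₁.zip L₂).flatMap fun pq => [(pq.1.1, pq.2.1), (pq.1.2, pq.2.2)] := by
  intro L₁
  induction L₁ with
  | nil => intro L₂ h; simp
  | cons p L₁ ih =>
    intro L₂ h
    cases L₂ with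
    | nil => simp at h
    | cons q L₂ =>
      simp only [List.flatMap_cons, List.cons_append, List.nil_append, List.zip_cons_cons,
        List.length_cons] at *
      rw [ih L₂ (by omega)]

private lemma exists_zip_left {α β : Type} :
    ∀ (l₁ : List α) (l₂ : List β), l₁.length = l₂.length → ∀ b ∈ l₂, ∃ a, (a, b) ∈ l₁.zip l₂ := by
  intro l₁
  induction l₁ with
  | nil => intro l₂ h b hb; cases l₂ <;> simp_all
  | cons a l₁ ih =>
    intro l₂ h b hb
    cases l₂ with
    | nil => simp at hb
    | cons b' l₂ =>
      rcases List.mem_cons.1 hb with rfl | hb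
      · exact ⟨a, by simp⟩
      · obtain ⟨x, hx⟩ := ih l₂ (by simpa using h) b hb
        exact ⟨x, by simp [hx]⟩

private lemma ext_equiv {α β : Type} [Fintype α] [Fintype β] [DecidableEq α] [DecidableEq β]
    (hcard : Fintype.card α = Fintype.card β) :
    ∀ (l₁ : List α) (l₂ : List β), l₁.Nodup → l₂.Nodup → l₁.length = l₂.length →
    ∃ f : α ≃ β, ∀ p ∈ l₁.zip l₂, f p.1 = p.2 := by
  intro l₁
  induction l₁ with
  | nil => intro l₂ _ _ _; exact ⟨Fintype.equivOfCardEq hcard, by simp⟩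
  | cons a l₁ ih =>
    intro l₂ hn₁ hn₂ hl
    cases l₂ with
    | nil => simp at hl
    | cons b l₂ =>
      obtain ⟨f, hf⟩ := ih l₂ (List.nodup_cons.1 hn₁).2 (List.nodup_cons.1 hn₂).2
        (by simpa using hl)
      refine ⟨f.trans (Equiv.swap (f a) b), ?_⟩
      rintro ⟨x, y⟩ hp
      rw [List.zip_cons_cons, List.mem_cons] at hp
      rcases hp with hp | hp
      · rw [Prod.mk.injEq] at hp
        obtain ⟨rfl, rfl⟩ := hp
        simp [Equiv.swap_apply_left]
      · have h1 := hf (x, y) hp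
        have hpa : x ≠ a := fun h => (List.nodup_cons.1 hn₁).1 (h ▸ (List.of_mem_zip hp).1)
        have hpb : y ≠ b := fun h => (List.nodup_cons.1 hn₂).1 (h ▸ (List.of_mem_zip hp).2)
        have h2 : f x ≠ f a := fun h => hpa (f.injective h)
        rw [h1] at h2
        simp only [Equiv.trans_apply, h1]
        exact Equiv.swap_apply_of_ne_of_ne h2 hpb

private lemma card_erase_erase {α : Type} [DecidableEq α] (A : Finset α) {u v : α} (huv : u ≠ v) :
    A.card = ((A.erase u).erase v).card + (if u ∈ A then 1 else 0) + (if v ∈ A then 1 else 0) := by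
  by_cases hu : u ∈ A <;> by_cases hv : v ∈ A <;> simp only [hu, hv, if_true, if_false]
  · have hv' : v ∈ A.erase u := Finset.mem_erase.2 ⟨huv.symm, hv⟩
    have h1 := Finset.card_erase_of_mem hu
    have h2 := Finset.card_erase_of_mem hv'
    have h3 : 0 < (A.erase u).card := Finset.card_pos.2 ⟨v, hv'⟩
    have h4 : 0 < A.card := Finset.card_pos.2 ⟨u, hu⟩
    omega
  · have hv' : v ∉ A.erase u := fun h => hv (Finset.mem_of_mem_erase h)
    rw [Finset.erase_eq_of_notMem hv', Finset.card_erase_of_mem hu]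
    have h4 : 0 < A.card := Finset.card_pos.2 ⟨u, hu⟩
    omega
  · rw [Finset.erase_eq_of_notMem hu, Finset.card_erase_of_mem hv]
    have h4 : 0 < A.card := Finset.card_pos.2 ⟨v, hv⟩
    omega
  · rw [Finset.erase_eq_of_notMem hu, Finset.erase_eq_of_notMem hv]
    omega

private lemma lb_sum {V : Type} [DecidableEq V] (F : SimpleGraph V) [DecidableRel F.Adj]
    (s : Finset V) {u w : V} (hu : u ∈ s) (hw : w ∈ s) (hne : u ≠ w) :
    2 * (s.filter (F.Adj u)).card + 2 * (s.filter (F.Adj w)).card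
      ≤ (∑ x ∈ s, (s.filter (F.Adj x)).card) + 2 * (if F.Adj u w then 1 else 0) := by
  set s'' := (s.erase u).erase w with hs''
  have hw' : w ∈ s.erase u := Finset.mem_erase.2 ⟨hne.symm, hw⟩
  have hsplit : ∑ x ∈ s, (s.filter (F.Adj x)).card
      = (∑ x ∈ s'', (s.filter (F.Adj x)).card) + (s.filter (F.Adj u)).card
        + (s.filter (F.Adj w)).card := by
    rw [← Finset.sum_erase_add s _ hu, ← Finset.sum_erase_add (s.erase u) _ hw']
    ring
  -- pointwise bound
  have hpt : ∀ x ∈ s'', (if F.Adj u x then 1 else 0) + (if F.Adj w x then 1 else 0)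
      ≤ (s.filter (F.Adj x)).card := by
    intro x hx
    by_cases h1 : F.Adj u x <;> by_cases h2 : F.Adj w x <;> simp only [h1, h2, if_true, if_false]
    · have hsub : ({u, w} : Finset V) ⊆ s.filter (F.Adj x) := by
        intro y hy
        rcases Finset.mem_insert.1 hy with rfl | hy
        · exact Finset.mem_filter.2 ⟨hu, h1.symm⟩
        · rw [Finset.mem_singleton] at hy
          subst hy
          exact Finset.mem_filter.2 ⟨hw, h2.symm⟩
      have := Finset.card_le_card hsub
      rwa [Finset.card_insert_of_notMem (by simpa using hne), Finset.card_singleton] at this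
    · exact Finset.card_pos.2 ⟨u, Finset.mem_filter.2 ⟨hu, h1.symm⟩⟩
    · exact Finset.card_pos.2 ⟨w, Finset.mem_filter.2 ⟨hw, h2.symm⟩⟩
    · exact Nat.zero_le _
  have hsum'' : (∑ x ∈ s'', (if F.Adj u x then 1 else 0))
        + (∑ x ∈ s'', (if F.Adj w x then 1 else 0)) ≤ ∑ x ∈ s'', (s.filter (F.Adj x)).card := by
    rw [← Finset.sum_add_distrib]
    exact Finset.sum_le_sum hpt
  have hb1 : (∑ x ∈ s'', (if F.Adj u x then 1 else 0)) = ((s''.filter (F.Adj u)).card : ℕ) := by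
    simpa using Finset.sum_boole (F.Adj u) s''
  have hb2 : (∑ x ∈ s'', (if F.Adj w x then 1 else 0)) = ((s''.filter (F.Adj w)).card : ℕ) := by
    simpa using Finset.sum_boole (F.Adj w) s''
  have hfil : ∀ y : V, s''.filter (F.Adj y) = ((s.filter (F.Adj y)).erase u).erase w := by
    intro y
    rw [hs'', Finset.filter_erase, Finset.filter_erase]
  have hc1 : (s.filter (F.Adj u)).card
      = (s''.filter (F.Adj u)).card + (if F.Adj u w then 1 else 0) := by
    rw [hfil u, card_erase_erase (s.filter (F.Adj u)) hne]
    have h1 : u ∉ s.filter (F.Adj u) := fun h => F.irrefl (Finset.mem_filter.1 h).2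
    simp [h1, Finset.mem_filter, hw]
  have hc2 : (s.filter (F.Adj w)).card
      = (s''.filter (F.Adj w)).card + (if F.Adj u w then 1 else 0) := by
    rw [hfil w, card_erase_erase (s.filter (F.Adj w)) hne]
    have h1 : w ∉ s.filter (F.Adj w) := fun h => F.irrefl (Finset.mem_filter.1 h).2
    have h2 : (if F.Adj w u then 1 else 0) = (if F.Adj u w then 1 else 0) := by
      simp [F.adj_comm w u]
    simp only [h1, if_false, Finset.mem_filter, hu, true_and]
    omega
  omega
private lemma key {V : Type} [DecidableEq V] (F : SimpleGraph V) [DecidableRel F.Adj]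
    (htf : ∀ a b c : V, F.Adj a b → F.Adj a c → F.Adj b c → False)
    (m : ℕ) : ∀ s : Finset V, s.card = m →
    (∀ v ∈ s, (s.filter (F.Adj v)).card ≤ m - 2) →
    ((∑ v ∈ s, (s.filter (F.Adj v)).card) ≤ 2 * m - 2) →
    ∃ L : List (V × V), L.length = m / 2 ∧
      (∀ p ∈ L, p.1 ∈ s ∧ p.2 ∈ s ∧ ¬F.Adj p.1 p.2) ∧
      (L.flatMap fun p => [p.1, p.2]).Nodup := by
  induction m using Nat.strong_induction_on with
  | _ m ih =>
  intro s hcard hdegs hsum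
  have nonnbr : ∀ u ∈ s, 2 ≤ m → ∃ v ∈ s, v ≠ u ∧ ¬F.Adj u v := by
    intro u hu hm
    by_contra hc
    push_neg at hc
    have hsub : s.erase u ⊆ s.filter (F.Adj u) := by
      intro x hx
      rw [Finset.mem_erase] at hx
      exact Finset.mem_filter.2 ⟨hx.2, hc x hx.2 hx.1⟩
    have h1 := Finset.card_le_card hsub
    rw [Finset.card_erase_of_mem hu, hcard] at h1
    have h2 := hdegs u hu
    omega
  by_cases hm1 : m ≤ 1
  · refine ⟨[], ?_, by simp, by simp⟩
    simp; omega
  by_cases hm3 : m ≤ 3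
  · obtain ⟨u, hu⟩ : s.Nonempty := Finset.card_pos.1 (by omega)
    obtain ⟨v, hv, hvu, hnadj⟩ := nonnbr u hu (by omega)
    refine ⟨[(u, v)], ?_, ?_, ?_⟩
    · simp; omega
    · intro p hp
      simp at hp
      subst hp
      exact ⟨hu, hv, hnadj⟩
    · simp [Ne.symm hvu]
  by_cases hm5 : m ≤ 5
  · -- m ∈ {4,5}
    obtain ⟨u, hu, hmax⟩ := Finset.exists_max_image s (fun v => (s.filter (F.Adj v)).card)
      (Finset.card_pos.1 (by omega))
    by_cases hd2 : 2 ≤ (s.filter (F.Adj u)).card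
    · obtain ⟨p, hp, q, hq, hpq⟩ := Finset.one_lt_card.1
        (show 1 < (s.filter (F.Adj u)).card by omega)
      rw [Finset.mem_filter] at hp hq
      obtain ⟨r, hr, hru, hnr⟩ := nonnbr u hu (by omega)
      have hnpq : ¬F.Adj p q := fun h => htf u p q hp.2 hq.2 h
      refine ⟨[(p, q), (u, r)], by simp; omega, ?_, ?_⟩
      · intro x hx
        simp at hx
        rcases hx with rfl | rfl
        exacts [⟨hp.1, hq.1, hnpq⟩, ⟨hu, hr, hnr⟩]
      · have h2 : p ≠ u := fun h => hp.2.ne (h.symm)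
        have h3 : q ≠ u := fun h => hq.2.ne (h.symm)
        have h4 : p ≠ r := fun h => hnr (h ▸ hp.2)
        have h5 : q ≠ r := fun h => hnr (h ▸ hq.2)
        have h6 : u ≠ r := Ne.symm hru
        simp [hpq, h2, h3, h4, h5, h6]
    · push_neg at hd2
      have hall : ∀ x ∈ s, (s.filter (F.Adj x)).card ≤ 1 := fun x hx => by
        have := hmax x hx; omega
      by_cases hE : ∃ x ∈ s, ∃ y ∈ s, F.Adj x y
      · obtain ⟨x, hx, y, hy, hxy⟩ := hE
        have hxyne := hxy.ne
        have hz : ∃ z ∈ s, z ≠ x ∧ z ≠ y := by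
          by_contra hc
          push_neg at hc
          have hsub : s ⊆ insert x {y} := by
            intro a ha
            by_cases h1 : a = x
            · simp [h1]
            · simp [hc a ha h1]
          have h5 := Finset.card_le_card hsub
          have h6 := Finset.card_insert_le x ({y} : Finset V)
          simp at h6
          omega
        obtain ⟨z, hzs, hzx, hzy⟩ := hz
        have hnxz : ¬F.Adj x z := by
          intro h
          have hsub : ({y, z} : Finset V) ⊆ s.filter (F.Adj x) := by
            intro a ha
            rcases Finset.mem_insert.1 ha with rfl | ha
            · exact Finset.mem_filter.2 ⟨hy, hxy⟩
            · rw [Finset.mem_singleton] at ha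
              subst ha
              exact Finset.mem_filter.2 ⟨hzs, h⟩
          have hcle := Finset.card_le_card hsub
          rw [Finset.card_insert_of_notMem (by simp [Ne.symm hzy]), Finset.card_singleton] at hcle
          have := hall x hx
          omega
        have hw : ∃ w ∈ s, w ≠ x ∧ w ≠ y ∧ w ≠ z := by
          by_contra hc
          push_neg at hc
          have hsub : s ⊆ insert x (insert y {z}) := by
            intro a ha
            by_cases h1 : a = x
            · simp [h1]
            by_cases h2 : a = y
            · simp [h2]
            · simp [hc a ha h1 h2]
          have h5 := Finset.card_le_card hsub
          have h6 : (insert x (insert y ({z} : Finset V))).card ≤ 3 := by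
            apply le_trans (Finset.card_insert_le _ _)
            have := Finset.card_insert_le y ({z} : Finset V)
            simp at this ⊢
            omega
          omega
        obtain ⟨w, hws, hwx, hwy, hwz⟩ := hw
        have hnyw : ¬F.Adj y w := by
          intro h
          have hsub : ({x, w} : Finset V) ⊆ s.filter (F.Adj y) := by
            intro a ha
            rcases Finset.mem_insert.1 ha with rfl | ha
            · exact Finset.mem_filter.2 ⟨hx, hxy.symm⟩
            · rw [Finset.mem_singleton] at ha
              subst ha
              exact Finset.mem_filter.2 ⟨hws, h⟩
          have hcle := Finset.card_le_card hsub
          rw [Finset.card_insert_of_notMem (by simp [Ne.symm hwx]), Finset.card_singleton] at hcle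
          have := hall y hy
          omega
        refine ⟨[(x, z), (y, w)], by simp; omega, ?_, ?_⟩
        · intro p hp
          simp at hp
          rcases hp with rfl | rfl
          exacts [⟨hx, hzs, hnxz⟩, ⟨hy, hws, hnyw⟩]
        · simp [Ne.symm hzx, hxyne, Ne.symm hwx, hzy, Ne.symm hwz, Ne.symm hwy]
      · push_neg at hE
        obtain ⟨a, ha⟩ := Finset.card_pos.1 (show 0 < s.card by omega)
        obtain ⟨b, hb⟩ := Finset.card_pos.1 (show 0 < (s.erase a).card by
          rw [Finset.card_erase_of_mem ha]; omega)
        obtain ⟨c, hc⟩ := Finset.card_pos.1 (show 0 < ((s.erase a).erase b).card by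
          rw [Finset.card_erase_of_mem hb, Finset.card_erase_of_mem ha]; omega)
        obtain ⟨d, hd⟩ := Finset.card_pos.1 (show 0 < (((s.erase a).erase b).erase c).card by
          rw [Finset.card_erase_of_mem hc, Finset.card_erase_of_mem hb,
            Finset.card_erase_of_mem ha]; omega)
        have hbs : b ∈ s := Finset.mem_of_mem_erase hb
        have hcs : c ∈ s := Finset.mem_of_mem_erase (Finset.mem_of_mem_erase hc)
        have hds : d ∈ s := Finset.mem_of_mem_erase (Finset.mem_of_mem_erase
          (Finset.mem_of_mem_erase hd))
        have hba : b ≠ a := (Finset.mem_erase.1 hb).1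
        have hcb : c ≠ b := (Finset.mem_erase.1 hc).1
        have hca : c ≠ a := (Finset.mem_erase.1 (Finset.mem_of_mem_erase hc)).1
        have hdc : d ≠ c := (Finset.mem_erase.1 hd).1
        have hdb : d ≠ b := (Finset.mem_erase.1 (Finset.mem_of_mem_erase hd)).1
        have hda : d ≠ a := (Finset.mem_erase.1 (Finset.mem_of_mem_erase
          (Finset.mem_of_mem_erase hd))).1
        refine ⟨[(a, b), (c, d)], by simp; omega, ?_, ?_⟩
        · intro p hp
          simp at hp
          rcases hp with rfl | rfl
          exacts [⟨ha, hbs, hE a ha b hbs⟩, ⟨hcs, hds, hE c hcs d hds⟩]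
        · simp [Ne.symm hba, Ne.symm hca, Ne.symm hda, Ne.symm hcb, Ne.symm hdb, Ne.symm hdc]
  · -- m ≥ 6
    have hm6 : 6 ≤ m := by omega
    obtain ⟨u, hu, hmax⟩ := Finset.exists_max_image s (fun v => (s.filter (F.Adj v)).card)
      (Finset.card_pos.1 (by omega))
    obtain ⟨v, hv, hvu, hnadj⟩ := nonnbr u hu (by omega)
    have hne : u ≠ v := Ne.symm hvu
    set s' := (s.erase u).erase v with hs'
    have hv' : v ∈ s.erase u := Finset.mem_erase.2 ⟨hvu, hv⟩
    have hsub' : s' ⊆ s := fun x hx => Finset.mem_of_mem_erase (Finset.mem_of_mem_erase hx)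
    have hcard' : s'.card = m - 2 := by
      rw [hs', Finset.card_erase_of_mem hv', Finset.card_erase_of_mem hu, hcard]
      omega
    have hus' : u ∉ s' := fun h => (Finset.mem_erase.1 (Finset.mem_of_mem_erase h)).1 rfl
    have hvs' : v ∉ s' := fun h => (Finset.mem_erase.1 h).1 rfl
    have hfil : ∀ y : V, s'.filter (F.Adj y) = ((s.filter (F.Adj y)).erase u).erase v := by
      intro y
      rw [hs', Finset.filter_erase, Finset.filter_erase]
    have hd : ∀ w, (s.filter (F.Adj w)).card = (s'.filter (F.Adj w)).card
        + (if F.Adj u w then 1 else 0) + (if F.Adj v w then 1 else 0) := by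
      intro w
      rw [hfil w, card_erase_erase (s.filter (F.Adj w)) hne]
      have e1 : (if u ∈ s.filter (F.Adj w) then 1 else 0) = (if F.Adj u w then 1 else 0) := by
        by_cases h : F.Adj u w
        · rw [if_pos h, if_pos (Finset.mem_filter.2 ⟨hu, h.symm⟩)]
        · rw [if_neg h, if_neg (fun hh => h (Finset.mem_filter.1 hh).2.symm)]
      have e2 : (if v ∈ s.filter (F.Adj w) then 1 else 0) = (if F.Adj v w then 1 else 0) := by
        by_cases h : F.Adj v w
        · rw [if_pos h, if_pos (Finset.mem_filter.2 ⟨hv, h.symm⟩)]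
        · rw [if_neg h, if_neg (fun hh => h (Finset.mem_filter.1 hh).2.symm)]
      omega
    have hdu : s'.filter (F.Adj u) = s.filter (F.Adj u) := by
      rw [hfil u,
        Finset.erase_eq_of_notMem (show u ∉ s.filter (F.Adj u) from
          fun h => F.irrefl (Finset.mem_filter.1 h).2),
        Finset.erase_eq_of_notMem (show v ∉ s.filter (F.Adj u) from
          fun h => hnadj (Finset.mem_filter.1 h).2)]
    have hdv : s'.filter (F.Adj v) = s.filter (F.Adj v) := by
      rw [hfil v,
        Finset.erase_eq_of_notMem (show u ∉ s.filter (F.Adj v) from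
          fun h => hnadj (Finset.mem_filter.1 h).2.symm),
        Finset.erase_eq_of_notMem (show v ∉ s.filter (F.Adj v) from
          fun h => F.irrefl (Finset.mem_filter.1 h).2)]
    have hEsplit : ∑ w ∈ s, (s.filter (F.Adj w)).card
        = (∑ w ∈ s', (s.filter (F.Adj w)).card) + (s.filter (F.Adj u)).card
          + (s.filter (F.Adj v)).card := by
      rw [← Finset.sum_erase_add s _ hu, ← Finset.sum_erase_add (s.erase u) _ hv']
      ring
    have hptsum : ∑ w ∈ s', (s.filter (F.Adj w)).card
        = (∑ w ∈ s', (s'.filter (F.Adj w)).card) + (s'.filter (F.Adj u)).card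
          + (s'.filter (F.Adj v)).card := by
      rw [Finset.sum_congr rfl (fun w _ => hd w), Finset.sum_add_distrib, Finset.sum_add_distrib]
      have hb1 : (∑ x ∈ s', (if F.Adj u x then 1 else 0)) = (s'.filter (F.Adj u)).card := by
        simpa using Finset.sum_boole (F.Adj u) s'
      have hb2 : (∑ x ∈ s', (if F.Adj v x then 1 else 0)) = (s'.filter (F.Adj v)).card := by
        simpa using Finset.sum_boole (F.Adj v) s'
      rw [hb1, hb2]
    rw [hdu, hdv] at hptsum
    have hdeg' : ∀ w ∈ s', (s'.filter (F.Adj w)).card ≤ (m - 2) - 2 := by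
      intro w hw
      by_contra hcon
      push_neg at hcon
      have hws : w ∈ s := hsub' hw
      have hwu : w ≠ u := fun h => hus' (h ▸ hw)
      have hdw := hd w
      have hmw := hmax w hws
      have hlb := lb_sum F s hu hws (Ne.symm hwu)
      by_cases hadj : F.Adj u w
      · simp only [hadj, if_true] at hdw hlb
        omega
      · simp only [hadj, if_false] at hdw hlb
        omega
    have hsum' : (∑ w ∈ s', (s'.filter (F.Adj w)).card) ≤ 2 * (m - 2) - 2 := by
      by_cases hd1 : (s.filter (F.Adj u)).card ≤ 1
      · have hallsum : ∑ w ∈ s, (s.filter (F.Adj w)).card ≤ m := by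
          calc ∑ w ∈ s, (s.filter (F.Adj w)).card ≤ ∑ _w ∈ s, 1 :=
                Finset.sum_le_sum (fun x hx => le_trans (hmax x hx) hd1)
            _ = m := by simp [hcard]
        omega
      · omega
    obtain ⟨L', hlen', hmem', hnd'⟩ := ih (m - 2) (by omega) s' hcard' hdeg' hsum'
    refine ⟨(u, v) :: L', ?_, ?_, ?_⟩
    · simp [hlen']
      omega
    · intro p hp
      rcases List.mem_cons.1 hp with rfl | hp
      · exact ⟨hu, hv, hnadj⟩
      · obtain ⟨h1, h2, h3⟩ := hmem' p hp
        exact ⟨hsub' h1, hsub' h2, h3⟩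
    · have hcoords : ∀ x ∈ L'.flatMap (fun p => [p.1, p.2]), x ∈ s' := by
        intro x hx
        rw [List.mem_flatMap] at hx
        obtain ⟨p, hp, hx⟩ := hx
        simp at hx
        rcases hx with rfl | rfl
        exacts [(hmem' p hp).1, (hmem' p hp).2.1]
      simp only [List.flatMap_cons, List.cons_append, List.nil_append]
      refine List.nodup_cons.2 ⟨?_, List.nodup_cons.2 ⟨fun h => hvs' (hcoords v h), hnd'⟩⟩
      intro h
      rcases List.mem_cons.1 h with h | h
      · exact hne h
      · exact hus' (hcoords u h)
private lemma star_iso {V : Type} [Fintype V] {n : ℕ} (hV : Fintype.card V = n)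
    (T : SimpleGraph V) (v : V) (hadj : ∀ w : V, w ≠ v → T.Adj v w)
    (hnadj : ∀ a b : V, a ≠ v → b ≠ v → ¬T.Adj a b) :
    Nonempty (T ≃g completeBipartiteGraph (Fin 1) (Fin (n - 1))) := by
  classical
  have hcount : Fintype.card {x : V // ¬ x = v} = n - 1 := by
    rw [Fintype.card_subtype_compl, Fintype.card_subtype_eq, hV]
  let e2 : {x : V // ¬ x = v} ≃ Fin (n - 1) := Fintype.equivFinOfCardEq hcount
  let f : V → Fin 1 ⊕ Fin (n - 1) := fun x =>
    if h : x = v then Sum.inl 0 else Sum.inr (e2 ⟨x, h⟩)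
  let g : Fin 1 ⊕ Fin (n - 1) → V := Sum.elim (fun _ => v) (fun i => (e2.symm i).1)
  have hgf : ∀ x, g (f x) = x := by
    intro x
    by_cases h : x = v
    · simp [f, g, h]
    · simp [f, g, h]
  have hfg : ∀ y, f (g y) = y := by
    rintro (i | i)
    · have : (0 : Fin 1) = i := Subsingleton.elim _ _
      simp [f, g, this]
    · have h : (e2.symm i).1 ≠ v := (e2.symm i).2
      simp [f, g, h]
  refine ⟨⟨⟨f, g, hgf, hfg⟩, ?_⟩⟩
  intro a b
  show (completeBipartiteGraph (Fin 1) (Fin (n - 1))).Adj (f a) (f b) ↔ T.Adj a b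
  by_cases ha : a = v <;> by_cases hb : b = v
  · subst ha; subst hb
    refine iff_of_false ?_ (T.irrefl)
    simp [f, completeBipartiteGraph]
  · subst ha
    refine iff_of_true ?_ (hadj b hb)
    simp [f, hb, completeBipartiteGraph]
  · subst hb
    refine iff_of_true ?_ (hadj a ha).symm
    simp [f, ha, completeBipartiteGraph]
  · refine iff_of_false ?_ (hnadj a b ha hb)
    simp [f, ha, hb, completeBipartiteGraph]

theorem stmt_6 {V W : Type} [Fintype V] [Fintype W] [DecidableEq W] {n : ℕ} (hn : 6 ≤ n)
    (hV : Fintype.card V = n) (hW : Fintype.card W = n)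
    (G : SimpleGraph W) [DecidableRel G.Adj]
    (hdeg : ∀ w : W, n - 2 ≤ G.degree w)
    (T : SimpleGraph V)
    (hconn : T.Connected) (hacyc : T.IsAcyclic)
    (hstar : ¬ Nonempty (T ≃g completeBipartiteGraph (Fin 1) (Fin (n - 1)))) :
    ∃ f : V ↪ W, ∀ u v : V, T.Adj u v → G.Adj (f u) (f v) := by
  classical
  -- triangle-freeness of T
  have htf : ∀ a b c : V, T.Adj a b → T.Adj a c → T.Adj b c → False := by
    intro a b c hab hac hbc
    refine hacyc (SimpleGraph.Walk.cons hab (SimpleGraph.Walk.cons hbc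
      (SimpleGraph.Walk.cons hac.symm SimpleGraph.Walk.nil))) ?_
    rw [SimpleGraph.Walk.isCycle_def]
    refine ⟨?_, by simp, ?_⟩
    · rw [SimpleGraph.Walk.isTrail_def]
      simp [Sym2.eq_iff, hab.ne, hbc.ne, hac.ne, Ne.symm hab.ne, Ne.symm hbc.ne, Ne.symm hac.ne]
    · simp [hab.ne, hbc.ne, hac.ne, Ne.symm hab.ne, Ne.symm hbc.ne, Ne.symm hac.ne]
  -- degree bound on T from non-star hypothesis
  have hdegT : ∀ v : V, ((univ : Finset V).filter (T.Adj v)).card ≤ n - 2 := by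
    intro v
    by_contra hbig
    push_neg at hbig
    have hsubset : univ.filter (T.Adj v) ⊆ univ.erase v :=
      fun x hx => Finset.mem_erase.2 ⟨(Finset.mem_filter.1 hx).2.ne', Finset.mem_univ x⟩
    have hcarde : (univ.erase v).card = n - 1 := by
      rw [Finset.card_erase_of_mem (Finset.mem_univ v), Finset.card_univ, hV]
    have hcle := Finset.card_le_card hsubset
    have heq : univ.filter (T.Adj v) = univ.erase v :=
      Finset.eq_of_subset_of_card_le hsubset (by omega)
    have hadjall : ∀ w : V, w ≠ v → T.Adj v w := by
      intro w hw
      have : w ∈ univ.filter (T.Adj v) := heq ▸ Finset.mem_erase.2 ⟨hw, Finset.mem_univ w⟩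
      exact (Finset.mem_filter.1 this).2
    exact hstar (star_iso hV T v hadjall
      (fun a b ha hb hab => htf v a b (hadjall a ha) (hadjall b hb) hab))
  have hfilter_eq : ∀ v : V, (univ : Finset V).filter (T.Adj v) = T.neighborFinset v :=
    fun v => (T.neighborFinset_eq_filter).symm
  have hsumT : ∑ v : V, ((univ : Finset V).filter (T.Adj v)).card ≤ 2 * n - 2 := by
    have h1 : ∑ v : V, T.degree v = 2 * T.edgeFinset.card :=
      T.sum_degrees_eq_twice_card_edges
    have h2 : T.edgeFinset.card + 1 = n := by
      have := SimpleGraph.IsTree.card_edgeFinset ⟨hconn, hacyc⟩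
      rw [hV] at this
      exact this
    have h3 : ∑ v : V, ((univ : Finset V).filter (T.Adj v)).card = ∑ v : V, T.degree v := by
      apply Finset.sum_congr rfl
      intro v _
      rw [hfilter_eq v]
      rfl
    omega
  obtain ⟨L, hLlen, hLmem, hLnd⟩ := key T htf n univ
    (by rw [Finset.card_univ, hV]) (fun v _ => hdegT v) hsumT
  -- the complement of G is a partial matching
  have hdegH : ∀ w : W, (Gᶜ).degree w ≤ 1 := by
    intro w
    have h1 := G.degree_compl w
    have h2 := G.degree_lt_card_verts w
    have h3 := hdeg w
    rw [hW] at h1 h2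
    omega
  set Lw : List (W × W) := (Gᶜ).edgeFinset.toList.map Quot.out with hLw_def
  have hLw_len : Lw.length = (Gᶜ).edgeFinset.card := by
    rw [hLw_def, List.length_map, Finset.length_toList]
  have hLw_pairs : ∀ p ∈ Lw, (Gᶜ).Adj p.1 p.2 := by
    intro p hp
    rw [hLw_def, List.mem_map] at hp
    obtain ⟨e, he, rfl⟩ := hp
    rw [Finset.mem_toList, SimpleGraph.mem_edgeFinset] at he
    have h1 : Sym2.mk (Quot.out e).1 (Quot.out e).2 = e := Quot.out_eq e
    rw [← h1] at he
    exact ((Gᶜ).mem_edgeSet).1 he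
  have hLw_cov : ∀ a b : W, (Gᶜ).Adj a b → (a, b) ∈ Lw ∨ (b, a) ∈ Lw := by
    intro a b hab
    have he : s(a, b) ∈ (Gᶜ).edgeFinset :=
      (SimpleGraph.mem_edgeFinset).2 (((Gᶜ).mem_edgeSet).2 hab)
    have hmem : Quot.out s(a, b) ∈ Lw := by
      rw [hLw_def]
      exact List.mem_map_of_mem (Finset.mem_toList.2 he)
    have h1 : (s((Quot.out s(a, b)).1, (Quot.out s(a, b)).2) : Sym2 W) = s(a, b) :=
      Quot.out_eq _
    rw [Sym2.eq_iff] at h1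
    rcases h1 with ⟨h3, h4⟩ | ⟨h3, h4⟩
    · left
      have : Quot.out s(a, b) = (a, b) := Prod.ext h3 h4
      rwa [this] at hmem
    · right
      have : Quot.out s(a, b) = (b, a) := Prod.ext h3 h4
      rwa [this] at hmem
  have hLw_nodup : (Lw.flatMap fun p => [p.1, p.2]).Nodup := by
    rw [List.nodup_flatMap]
    constructor
    · intro p hp
      simp [(hLw_pairs p hp).ne]
    · rw [hLw_def]
      refine List.pairwise_map.2 (List.Pairwise.imp_of_mem ?_ (Finset.nodup_toList (Gᶜ).edgeFinset))
      intro e e' he he' hnee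
      intro x hx hx'
      rw [Finset.mem_toList, SimpleGraph.mem_edgeFinset] at he he'
      have hxe : x ∈ e := by
        rw [← Quot.out_eq e]
        simp only [List.mem_cons, List.not_mem_nil, or_false] at hx
        rcases hx with rfl | rfl
        · exact Sym2.mem_mk_left _ _
        · exact Sym2.mem_mk_right _ _
      have hxe' : x ∈ e' := by
        rw [← Quot.out_eq e']
        simp only [List.mem_cons, List.not_mem_nil, or_false] at hx'
        rcases hx' with rfl | rfl
        · exact Sym2.mem_mk_left _ _
        · exact Sym2.mem_mk_right _ _
      have hinc : e ∈ (Gᶜ).incidenceFinset x :=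
        (SimpleGraph.mem_incidenceFinset _ _ _).2 ⟨he, hxe⟩
      have hinc' : e' ∈ (Gᶜ).incidenceFinset x :=
        (SimpleGraph.mem_incidenceFinset _ _ _).2 ⟨he', hxe'⟩
      have hlt : 1 < ((Gᶜ).incidenceFinset x).card :=
        Finset.one_lt_card.2 ⟨e, hinc, e', hinc', hnee⟩
      rw [SimpleGraph.card_incidenceFinset_eq_degree] at hlt
      have := hdegH x
      omega
  have h2k : 2 * (Gᶜ).edgeFinset.card ≤ n := by
    have h1 := SimpleGraph.sum_degrees_eq_twice_card_edges (Gᶜ)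
    have h2 : ∑ w : W, (Gᶜ).degree w ≤ n := by
      calc ∑ w : W, (Gᶜ).degree w ≤ ∑ _w : W, 1 := Finset.sum_le_sum (fun x _ => hdegH x)
        _ = n := by simp [hW]
    omega
  set L' := L.take Lw.length with hL'_def
  have hL'len : L'.length = Lw.length := by
    rw [hL'_def, List.length_take, hLlen]
    omega
  have hL'sub : ∀ p ∈ L', p ∈ L := fun p hp => (List.take_sublist _ L).subset hp
  have hL'nd : (L'.flatMap fun p => [p.1, p.2]).Nodup :=
    List.Nodup.sublist (flatMap_sublist _ (List.take_sublist _ L)) hLnd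
  obtain ⟨f, hf⟩ := ext_equiv (hV.trans hW.symm) (L'.flatMap fun p => [p.1, p.2])
    (Lw.flatMap fun p => [p.1, p.2]) hL'nd hLw_nodup
    (by rw [flat_length, flat_length, hL'len])
  have halign : ∀ pq ∈ L'.zip Lw, f pq.1.1 = pq.2.1 ∧ f pq.1.2 = pq.2.2 := by
    intro pq hpq
    have hz := zip_flatMap_pairs L' Lw hL'len
    constructor
    · refine hf (pq.1.1, pq.2.1) ?_
      rw [hz, List.mem_flatMap]
      exact ⟨pq, hpq, by simp⟩
    · refine hf (pq.1.2, pq.2.2) ?_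
      rw [hz, List.mem_flatMap]
      exact ⟨pq, hpq, by simp⟩
  refine ⟨f.toEmbedding, ?_⟩
  intro u v huv
  by_contra hG
  simp only [Equiv.coe_toEmbedding] at hG ⊢
  have hc : (Gᶜ).Adj (f u) (f v) :=
    (G.compl_adj (f u) (f v)).2 ⟨fun h => huv.ne (f.injective h), hG⟩
  rcases hLw_cov _ _ hc with hmem | hmem
  · obtain ⟨p, hp⟩ := exists_zip_left L' Lw hL'len _ hmem
    obtain ⟨h1, h2⟩ := halign (p, (f u, f v)) hp
    have hpu : p.1 = u := f.injective h1
    have hpv : p.2 = v := f.injective h2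
    have hni := (hLmem p (hL'sub p (List.of_mem_zip hp).1)).2.2
    rw [hpu, hpv] at hni
    exact hni huv
  · obtain ⟨p, hp⟩ := exists_zip_left L' Lw hL'len _ hmem
    obtain ⟨h1, h2⟩ := halign (p, (f v, f u)) hp
    have hpu : p.1 = v := f.injective h1
    have hpv : p.2 = u := f.injective h2
    have hni := (hLmem p (hL'sub p (List.of_mem_zip hp).1)).2.2
    rw [hpu, hpv] at hni
    exact hni huv.symm
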